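/- arXiv:1306.5461 — 2 statements merged into one kernel-verified Lean document; each statement's English description precedes it below -/
import Mathlib

section
/- Let H be a real Hilbert space, Ĝ ⊆ H a closed convex cone, and Ḡ the closed linear span of Ĝ. If κ̂ and κ̄ denote the best approximations of κ ∈ H in Ĝ and Ḡ respectively, then ‖κ̂‖ ≤ ‖κ̄‖, with strict inequality unless κ̂ = κ̄. -/
open RealInnerProductSpace

theorem stmt_2 {H : Type*} [NormedAddCommGroup H] [InnerProductSpace ℝ H] [CompleteSpace H]
    (Ghat : Set H) (hGc : IsClosed Ghat) (hGconv : Convex ℝ Ghat)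
    (hcone : ∀ g ∈ Ghat, ∀ γ : ℝ, 0 ≤ γ → γ • g ∈ Ghat)
    (κ κhat κbar : H)
    (hκhat : κhat ∈ Ghat) (hκhatmin : ∀ x ∈ Ghat, ‖κ - κhat‖ ≤ ‖κ - x‖)
    (hκbar : κbar ∈ closure (Submodule.span ℝ Ghat : Set H))
    (hκbarmin : ∀ x ∈ closure (Submodule.span ℝ Ghat : Set H), ‖κ - κbar‖ ≤ ‖κ - x‖) :
    ‖κhat‖ ≤ ‖κbar‖ ∧ (κhat ≠ κbar → ‖κhat‖ < ‖κbar‖) := by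
  set K := (Submodule.span ℝ Ghat).topologicalClosure with hK
  have hKset : (K : Set H) = closure (Submodule.span ℝ Ghat : Set H) := rfl
  -- κhat ∈ K
  have hhatK : κhat ∈ K := subset_closure (Submodule.subset_span hκhat)
  have hbarK : κbar ∈ K := hκbar
  -- iInf characterizations
  have hbd : BddBelow (Set.range fun w : K => ‖κ - w‖) :=
    ⟨0, fun _ ⟨_, h⟩ => h ▸ norm_nonneg _⟩
  have hbdG : BddBelow (Set.range fun w : Ghat => ‖κ - w‖) :=
    ⟨0, fun _ ⟨_, h⟩ => h ▸ norm_nonneg _⟩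
  haveI : Nonempty K := ⟨⟨κhat, hhatK⟩⟩
  have heqK : ‖κ - κbar‖ = ⨅ w : K, ‖κ - w‖ :=
    le_antisymm (le_ciInf fun w => hκbarmin w w.2) (ciInf_le hbd ⟨κbar, hbarK⟩)
  haveI : Nonempty Ghat := ⟨⟨κhat, hκhat⟩⟩
  have heqG : ‖κ - κhat‖ = ⨅ w : Ghat, ‖κ - w‖ :=
    le_antisymm (le_ciInf fun w => hκhatmin w w.2) (ciInf_le hbdG ⟨κhat, hκhat⟩)
  have horthK : ∀ w ∈ K, ⟪κ - κbar, w⟫ = 0 :=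
    (Submodule.norm_eq_iInf_iff_real_inner_eq_zero K hbarK).1 heqK
  have hvar : ∀ w ∈ Ghat, ⟪κ - κhat, w - κhat⟫ ≤ 0 :=
    (norm_eq_iInf_iff_real_inner_le_zero hGconv hκhat).1 heqG
  -- ⟪κ - κhat, κhat⟫ = 0
  have h2 : (2 : ℝ) • κhat ∈ Ghat := hcone κhat hκhat 2 (by norm_num)
  have h0 : (0 : H) ∈ Ghat := by
    have := hcone κhat hκhat 0 le_rfl; simpa using this
  have ha : ⟪κ - κhat, κhat⟫ ≤ 0 := by
    have := hvar _ h2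
    have e : (2 : ℝ) • κhat - κhat = κhat := by
      rw [two_smul]; abel
    rwa [e] at this
  have hb : ⟪κ - κhat, κhat⟫ ≥ 0 := by
    have := hvar _ h0
    rw [zero_sub, inner_neg_right] at this
    linarith
  have hhat0 : ⟪κ - κhat, κhat⟫ = 0 := le_antisymm ha hb
  have hbar0 : ⟪κ - κbar, κhat⟫ = 0 := horthK κhat hhatK
  -- ⟪κbar, κhat⟫ = ‖κhat‖²
  have hinner : ⟪κbar, κhat⟫ = ‖κhat‖ ^ 2 := by
    have h1 : ⟪κ, κhat⟫ - ⟪κhat, κhat⟫ = 0 := by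
      rw [← inner_sub_left]; exact hhat0
    have h2' : ⟪κ, κhat⟫ - ⟪κbar, κhat⟫ = 0 := by
      rw [← inner_sub_left]; exact hbar0
    rw [← real_inner_self_eq_norm_sq]
    linarith
  -- Pythagoras: ‖κbar‖² = ‖κhat‖² + ‖κbar - κhat‖²
  have hpyth : ‖κbar‖ ^ 2 = ‖κhat‖ ^ 2 + ‖κbar - κhat‖ ^ 2 := by
    have := norm_sub_sq_real κbar κhat
    rw [hinner] at this
    linarith
  have hsq : ‖κhat‖ ^ 2 ≤ ‖κbar‖ ^ 2 := by nlinarith [sq_nonneg ‖κbar - κhat‖]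
  constructor
  · nlinarith [norm_nonneg κhat, norm_nonneg κbar]
  · intro hne
    have hpos : 0 < ‖κbar - κhat‖ := by
      rw [norm_pos_iff, sub_ne_zero]; exact fun h => hne h.symm
    nlinarith [norm_nonneg κhat, norm_nonneg κbar]
end

section
/- In the setting of the previous finite-dimensional nuisance model, for any ψ ∈ L²(P; ℝᵏ) with E ψ = 0, E(ψ Λᵀ) = I_k and E(ψ Δᵀ) = 0, one has Cov ψ ≥ 𝓙⁻¹ in the Loewner order, with equality iff ψ = ψ_eff almost surely. -/
open MeasureTheory Matrix

private lemma int_mul' {Ω : Type*} [MeasurableSpace Ω] {P : Measure Ω} {f g : Ω → ℝ}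
    (hf : MemLp f 2 P) (hg : MemLp g 2 P) : Integrable (fun x => f x * g x) P := by
  have h1 := (hf.add hg).integrable_sq
  have h2 := hf.integrable_sq
  have h3 := hg.integrable_sq
  have he : (fun x => f x * g x) = fun x => ((f x + g x) ^ 2 - f x ^ 2 - g x ^ 2) / 2 := by
    funext x; ring
  rw [he]
  exact ((h1.sub h2).sub h3).div_const 2

theorem stmt_15 {Ω : Type*} [MeasurableSpace Ω] (P : Measure Ω) [IsProbabilityMeasure P]
    {k m : ℕ}
    (Λ : Ω → Fin k → ℝ) (Δ : Ω → Fin m → ℝ)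
    (hΛ : ∀ i, MemLp (fun x => Λ x i) 2 P) (hΔ : ∀ j, MemLp (fun x => Δ x j) 2 P)
    (hEΛ : ∀ i, ∫ x, Λ x i ∂P = 0) (hEΔ : ∀ j, ∫ x, Δ x j ∂P = 0)
    (CovΛ : Matrix (Fin k) (Fin k) ℝ) (hCovΛ : CovΛ = fun i j => ∫ x, Λ x i * Λ x j ∂P)
    (𝓒 : Matrix (Fin k) (Fin m) ℝ) (h𝓒 : 𝓒 = fun i j => ∫ x, Λ x i * Δ x j ∂P)
    (𝓓 : Matrix (Fin m) (Fin m) ℝ) (h𝓓 : 𝓓 = fun i j => ∫ x, Δ x i * Δ x j ∂P)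
    (h𝓓pos : 𝓓.PosDef)
    (𝓙 : Matrix (Fin k) (Fin k) ℝ) (h𝓙 : 𝓙 = CovΛ - 𝓒 * 𝓓⁻¹ * 𝓒ᵀ)
    (h𝓙pos : 𝓙.PosDef)
    (ψeff : Ω → Fin k → ℝ) (hψeff : ψeff = fun x => 𝓙⁻¹ *ᵥ (Λ x - (𝓒 * 𝓓⁻¹) *ᵥ Δ x))
    (ψ : Ω → Fin k → ℝ) (hψL2 : ∀ i, MemLp (fun x => ψ x i) 2 P)
    (hψ0 : ∀ i, ∫ x, ψ x i ∂P = 0)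
    (hψΛ : ∀ i j, ∫ x, ψ x i * Λ x j ∂P = (1 : Matrix (Fin k) (Fin k) ℝ) i j)
    (hψΔ : ∀ i j, ∫ x, ψ x i * Δ x j ∂P = 0)
    (Covψ : Matrix (Fin k) (Fin k) ℝ) (hCovψ : Covψ = fun i j => ∫ x, ψ x i * ψ x j ∂P) :
    (Covψ - 𝓙⁻¹).PosSemidef ∧ (Covψ = 𝓙⁻¹ ↔ ∀ᵐ x ∂P, ψ x = ψeff x) := by
  classical
  have hDdet : IsUnit 𝓓.det := isUnit_iff_ne_zero.mpr h𝓓pos.det_pos.ne'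
  have hJdet : IsUnit 𝓙.det := isUnit_iff_ne_zero.mpr h𝓙pos.det_pos.ne'
  have hC' : ∀ a b, 𝓒 a b = ∫ x, Λ x a * Δ x b ∂P := fun a b => by rw [h𝓒]
  have hD' : ∀ a b, 𝓓 a b = ∫ x, Δ x a * Δ x b ∂P := fun a b => by rw [h𝓓]
  have hCovΛ' : ∀ a b, CovΛ a b = ∫ x, Λ x a * Λ x b ∂P := fun a b => by rw [hCovΛ]
  have hCov' : ∀ a b, Covψ a b = ∫ x, ψ x a * ψ x b ∂P := fun a b => by rw [hCovψ]
  have hCsym : CovΛᵀ = CovΛ := by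
    rw [hCovΛ]; ext i j
    exact integral_congr_ae (Filter.Eventually.of_forall fun x => mul_comm _ _)
  have hDsym : 𝓓ᵀ = 𝓓 := by
    rw [h𝓓]; ext i j
    exact integral_congr_ae (Filter.Eventually.of_forall fun x => mul_comm _ _)
  have hDinvsym : (𝓓⁻¹)ᵀ = 𝓓⁻¹ := by rw [Matrix.transpose_nonsing_inv, hDsym]
  have hJsym : 𝓙ᵀ = 𝓙 := by
    rw [h𝓙]
    simp [Matrix.transpose_sub, Matrix.transpose_mul, Matrix.transpose_transpose, hCsym,
      hDinvsym, Matrix.mul_assoc]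
  have hJisym : (𝓙⁻¹)ᵀ = 𝓙⁻¹ := by rw [Matrix.transpose_nonsing_inv, hJsym]
  have hJi : ∀ i j, 𝓙⁻¹ i j = 𝓙⁻¹ j i := fun i j => congrFun (congrFun hJisym j) i
  set A : Matrix (Fin k) (Fin m) ℝ := 𝓒 * 𝓓⁻¹ with hA
  have hmat : CovΛ - 𝓒 * Aᵀ - A * 𝓒ᵀ + A * 𝓓 * Aᵀ = 𝓙 := by
    have h1 : Aᵀ = 𝓓⁻¹ * 𝓒ᵀ := by rw [hA, Matrix.transpose_mul, hDinvsym]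
    have h2 : A * 𝓓 * (𝓓⁻¹ * 𝓒ᵀ) = A * 𝓒ᵀ := by
      rw [Matrix.mul_assoc A, ← Matrix.mul_assoc 𝓓, Matrix.mul_nonsing_inv _ hDdet,
        Matrix.one_mul]
    have h3 : A * 𝓒ᵀ = 𝓒 * 𝓓⁻¹ * 𝓒ᵀ := by rw [hA]
    rw [h1, h2, h3, ← Matrix.mul_assoc 𝓒 𝓓⁻¹ 𝓒ᵀ, h𝓙]
    abel
  -- the residual of Λ after projecting on Δ
  set η : Ω → Fin k → ℝ := fun x l => Λ x l - ∑ s, A l s * Δ x s with hη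
  have hηL2 : ∀ l, MemLp (fun x => η x l) 2 P := fun l =>
    (hΛ l).sub (memLp_finset_sum _ fun s _ => (hΔ s).const_mul _)
  have Hr : ∀ (f : Ω → ℝ), MemLp f 2 P → ∀ t, ∫ x, f x * η x t ∂P =
      (∫ x, f x * Λ x t ∂P) - ∑ u, A t u * ∫ x, f x * Δ x u ∂P := by
    intro f hf t
    have hfun : (fun x => f x * η x t) =
        fun x => f x * Λ x t - ∑ u, A t u * (f x * Δ x u) := by
      funext x
      simp only [hη]
      rw [mul_sub, Finset.mul_sum]
      congr 1
      exact Finset.sum_congr rfl fun u _ => by ring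
    rw [hfun, integral_sub (int_mul' hf (hΛ t))
        (integrable_finset_sum _ fun u _ => ((int_mul' hf (hΔ u)).const_mul _)),
      integral_finset_sum _ fun u _ => ((int_mul' hf (hΔ u)).const_mul _)]
    simp_rw [integral_const_mul]
  have Hl : ∀ (f : Ω → ℝ), MemLp f 2 P → ∀ l, ∫ x, η x l * f x ∂P =
      (∫ x, Λ x l * f x ∂P) - ∑ s, A l s * ∫ x, Δ x s * f x ∂P := by
    intro f hf l
    have h1 : ∫ x, η x l * f x ∂P = ∫ x, f x * η x l ∂P :=
      integral_congr_ae (Filter.Eventually.of_forall fun x => mul_comm _ _)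
    have h2 : ∫ x, f x * Λ x l ∂P = ∫ x, Λ x l * f x ∂P :=
      integral_congr_ae (Filter.Eventually.of_forall fun x => mul_comm _ _)
    have h3 : ∀ u, ∫ x, f x * Δ x u ∂P = ∫ x, Δ x u * f x ∂P := fun u =>
      integral_congr_ae (Filter.Eventually.of_forall fun x => mul_comm _ _)
    rw [h1, Hr f hf l, h2]
    simp_rw [h3]
  have I1 : ∀ i l, ∫ x, ψ x i * η x l ∂P = (1 : Matrix (Fin k) (Fin k) ℝ) i l := by
    intro i l
    rw [Hr _ (hψL2 i) l, hψΛ]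
    simp [hψΔ]
  have I2 : ∀ l t, ∫ x, η x l * η x t ∂P = 𝓙 l t := by
    intro l t
    rw [Hr _ (hηL2 l) t]
    have e1 : ∫ x, η x l * Λ x t ∂P = CovΛ l t - ∑ s, A l s * 𝓒 t s := by
      rw [Hl _ (hΛ t) l, ← hCovΛ' l t]
      congr 1
      refine Finset.sum_congr rfl fun s _ => ?_
      rw [hC' t s]
      congr 1
      exact integral_congr_ae (Filter.Eventually.of_forall fun x => mul_comm _ _)
    have e2 : ∀ u, ∫ x, η x l * Δ x u ∂P = 𝓒 l u - ∑ s, A l s * 𝓓 s u := by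
      intro u
      rw [Hl _ (hΔ u) l, ← hC' l u]
      congr 1
      refine Finset.sum_congr rfl fun s _ => ?_
      rw [hD' s u]
    rw [e1]
    simp_rw [e2]
    conv_rhs => rw [← hmat]
    simp only [Matrix.sub_apply, Matrix.add_apply, Matrix.mul_apply, Matrix.transpose_apply]
    have e3 : ∀ u, A t u * (𝓒 l u - ∑ s, A l s * 𝓓 s u) =
        𝓒 l u * A t u - (∑ s, A l s * 𝓓 s u) * A t u := fun u => by ring
    simp_rw [e3]
    rw [Finset.sum_sub_distrib]
    ring
  have hψeff' : ∀ x j, ψeff x j = ∑ l, 𝓙⁻¹ j l * η x l := by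
    intro x j
    rw [hψeff]
    simp [Matrix.mulVec, dotProduct, hη, Pi.sub_apply]
  have hψeffL2 : ∀ j, MemLp (fun x => ψeff x j) 2 P := by
    intro j
    have h : (fun x => ψeff x j) = fun x => ∑ l, 𝓙⁻¹ j l * η x l := funext fun x => hψeff' x j
    rw [h]
    exact memLp_finset_sum _ fun l _ => (hηL2 l).const_mul _
  have Iψe : ∀ i j, ∫ x, ψ x i * ψeff x j ∂P = 𝓙⁻¹ i j := by
    intro i j
    have hfun : (fun x => ψ x i * ψeff x j) = fun x => ∑ l, 𝓙⁻¹ j l * (ψ x i * η x l) := by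
      funext x
      rw [hψeff' x j, Finset.mul_sum]
      exact Finset.sum_congr rfl fun l _ => by ring
    rw [hfun, integral_finset_sum _ fun l _ => ((int_mul' (hψL2 i) (hηL2 l)).const_mul _)]
    simp_rw [integral_const_mul, I1]
    simp only [Matrix.one_apply, mul_ite, mul_one, mul_zero, Finset.sum_ite_eq,
      Finset.mem_univ, if_true]
    exact hJi j i
  have Ieff : ∀ i j, ∫ x, ψeff x i * ψeff x j ∂P = 𝓙⁻¹ i j := by
    intro i j
    have hfun : (fun x => ψeff x i * ψeff x j) =
        fun x => ∑ l, ∑ t, (𝓙⁻¹ i l * 𝓙⁻¹ j t) * (η x l * η x t) := by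
      funext x
      rw [hψeff' x i, hψeff' x j, Finset.sum_mul_sum]
      exact Finset.sum_congr rfl fun l _ => Finset.sum_congr rfl fun t _ => by ring
    have hin : ∀ l, ∫ x, ∑ t, (𝓙⁻¹ i l * 𝓙⁻¹ j t) * (η x l * η x t) ∂P =
        ∑ t, (𝓙⁻¹ i l * 𝓙⁻¹ j t) * 𝓙 l t := by
      intro l
      rw [integral_finset_sum _ fun t _ => ((int_mul' (hηL2 l) (hηL2 t)).const_mul _)]
      simp_rw [integral_const_mul, I2]
    rw [hfun, integral_finset_sum _ fun l _ =>
      integrable_finset_sum _ fun t _ => ((int_mul' (hηL2 l) (hηL2 t)).const_mul _)]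
    simp_rw [hin]
    have hM : 𝓙⁻¹ * 𝓙 * (𝓙⁻¹)ᵀ = 𝓙⁻¹ := by
      rw [Matrix.nonsing_inv_mul _ hJdet, Matrix.one_mul, hJisym]
    calc ∑ l, ∑ t, (𝓙⁻¹ i l * 𝓙⁻¹ j t) * 𝓙 l t = (𝓙⁻¹ * 𝓙 * (𝓙⁻¹)ᵀ) i j := by
          simp only [Matrix.mul_apply, Matrix.transpose_apply, Finset.sum_mul]
          rw [Finset.sum_comm]
          exact Finset.sum_congr rfl fun t _ => Finset.sum_congr rfl fun l _ => by ring
      _ = 𝓙⁻¹ i j := by rw [hM]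
  set r : Ω → Fin k → ℝ := fun x i => ψ x i - ψeff x i with hrdef
  have hr2 : ∀ i, MemLp (fun x => r x i) 2 P := fun i => (hψL2 i).sub (hψeffL2 i)
  have hGram : ∀ i j, ∫ x, r x i * r x j ∂P = Covψ i j - 𝓙⁻¹ i j := by
    intro i j
    have h0 : ∫ x, r x i * r x j ∂P =
        ∫ x, (ψ x i * ψ x j - ψ x i * ψeff x j) - (ψ x j * ψeff x i - ψeff x i * ψeff x j) ∂P :=
      integral_congr_ae (Filter.Eventually.of_forall fun x => by simp only [hrdef]; ring)
    have ha : ∫ x, ψ x i * ψ x j - ψ x i * ψeff x j ∂P =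
        (∫ x, ψ x i * ψ x j ∂P) - ∫ x, ψ x i * ψeff x j ∂P :=
      integral_sub (int_mul' (hψL2 i) (hψL2 j)) (int_mul' (hψL2 i) (hψeffL2 j))
    have hb : ∫ x, ψ x j * ψeff x i - ψeff x i * ψeff x j ∂P =
        (∫ x, ψ x j * ψeff x i ∂P) - ∫ x, ψeff x i * ψeff x j ∂P :=
      integral_sub (int_mul' (hψL2 j) (hψeffL2 i)) (int_mul' (hψeffL2 i) (hψeffL2 j))
    have hc : ∫ x, (ψ x i * ψ x j - ψ x i * ψeff x j) -
          (ψ x j * ψeff x i - ψeff x i * ψeff x j) ∂P =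
        (∫ x, ψ x i * ψ x j - ψ x i * ψeff x j ∂P) -
          ∫ x, ψ x j * ψeff x i - ψeff x i * ψeff x j ∂P :=
      integral_sub ((int_mul' (hψL2 i) (hψL2 j)).sub (int_mul' (hψL2 i) (hψeffL2 j)))
        ((int_mul' (hψL2 j) (hψeffL2 i)).sub (int_mul' (hψeffL2 i) (hψeffL2 j)))
    rw [h0, hc, ha, hb, Iψe i j, Iψe j i, Ieff i j, ← hCov' i j, hJi j i]
    ring
  refine ⟨⟨?_, ?_⟩, ?_, ?_⟩
  · ext i j
    simp only [Matrix.conjTranspose_apply, Matrix.sub_apply, star_trivial]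
    rw [← hGram j i, ← hGram i j]
    exact integral_congr_ae (Filter.Eventually.of_forall fun x => mul_comm _ _)
  · intro v
    have hsum : dotProduct (star v) ((Covψ - 𝓙⁻¹) *ᵥ v) =
        ∑ i, ∑ j, v i * v j * ((Covψ - 𝓙⁻¹) i j) := by
      simp only [dotProduct, Matrix.mulVec, Pi.star_apply, star_trivial,
        Finset.mul_sum]
      exact Finset.sum_congr rfl fun i _ => Finset.sum_congr rfl fun j _ => by ring
    have hterm : ∀ i j, v i * v j * ((Covψ - 𝓙⁻¹) i j) =
        ∫ x, (v i * r x i) * (v j * r x j) ∂P := by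
      intro i j
      have h : (fun x => (v i * r x i) * (v j * r x j)) =
          fun x => (v i * v j) * (r x i * r x j) := by funext x; ring
      rw [h, integral_const_mul, hGram i j, Matrix.sub_apply]
    have hexp : (fun x => (∑ i, v i * r x i) ^ 2) =
        fun x => ∑ i, ∑ j, (v i * r x i) * (v j * r x j) := by
      funext x; rw [pow_two, Finset.sum_mul_sum]
    have hswap : ∫ x, (∑ i, v i * r x i) ^ 2 ∂P =
        ∑ i, ∑ j, ∫ x, (v i * r x i) * (v j * r x j) ∂P := by
      rw [hexp, integral_finset_sum _ fun i _ => integrable_finset_sum _ fun j _ =>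
        int_mul' ((hr2 i).const_mul _) ((hr2 j).const_mul _)]
      exact Finset.sum_congr rfl fun i _ => integral_finset_sum _ fun j _ =>
        int_mul' ((hr2 i).const_mul _) ((hr2 j).const_mul _)
    rw [show (v.sum fun i xi => v.sum fun j xj => star xi * (Covψ - 𝓙⁻¹) i j * xj) =
        ∑ i, ∑ j, v i * v j * ((Covψ - 𝓙⁻¹) i j) by
      rw [Finsupp.sum_fintype _ _ (by simp)]
      exact Finset.sum_congr rfl fun i _ => by
        rw [Finsupp.sum_fintype _ _ (by simp)]
        exact Finset.sum_congr rfl fun j _ => by simp only [star_trivial]; ring]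
    simp_rw [hterm]
    rw [← hswap]
    exact integral_nonneg fun x => sq_nonneg _
  · intro heq
    have hzero : ∀ i, ∀ᵐ x ∂P, r x i = 0 := by
      intro i
      have h2 : ∫ x, r x i * r x i ∂P = 0 := by rw [hGram i i, heq, sub_self]
      have h3 := (integral_eq_zero_iff_of_nonneg (fun x => mul_self_nonneg (r x i))
        (int_mul' (hr2 i) (hr2 i))).mp h2
      filter_upwards [h3] with x hx
      exact mul_self_eq_zero.mp hx
    have hall : ∀ᵐ x ∂P, ∀ i, r x i = 0 := ae_all_iff.mpr hzero
    filter_upwards [hall] with x hx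
    funext i
    have := hx i
    simp only [hrdef] at this
    linarith
  · intro hae
    ext i j
    rw [hCov' i j, ← Ieff i j]
    exact integral_congr_ae (hae.mono fun x hx => by simp only [hx])
end
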